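/- arXiv:1710.08122 — 3 statements merged into one kernel-verified Lean document; each statement's English description precedes it below -/
import Mathlib

section
/- If θ = ξ∂_x + η∂_y satisfies ∂_x(η - Fξ) + F∂_y(η - Fξ) = (∂_y F)(η - Fξ) and η - Fξ is nowhere zero, then χ = 1/(η - Fξ) satisfies ∂_x χ - ∂_y(ωχ) = 0 with ω = -F, i.e. χ is an integrating factor making the 1-form χ(dy + ω dx) closed. -/
/-- If `θ = ξ∂_x + η∂_y` satisfies Lie's condition
`∂_x(η - Fξ) + F ∂_y(η - Fξ) = F_y (η - Fξ)` and `η - Fξ` is nowhere zero,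
then `χ = 1/(η - Fξ)` is an integrating factor for `dy + ω dx` with `ω = -F`:
`∂_x χ - ∂_y(ωχ) = 0`. -/
theorem integrating_factor (F ξ η : ℝ × ℝ → ℝ)
    (hF : ContDiff ℝ 1 F) (hξ : ContDiff ℝ 1 ξ) (hη : ContDiff ℝ 1 η)
    (h0 : ∀ q, η q - F q * ξ q ≠ 0)
    (hlie : ∀ q, fderiv ℝ (fun p => η p - F p * ξ p) q (1, 0)
        + F q * fderiv ℝ (fun p => η p - F p * ξ p) q (0, 1)
      = fderiv ℝ F q (0, 1) * (η q - F q * ξ q)) :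
    ∀ q : ℝ × ℝ,
      fderiv ℝ (fun p => (η p - F p * ξ p)⁻¹) q (1, 0)
        - fderiv ℝ (fun p => (-(F p)) * (η p - F p * ξ p)⁻¹) q (0, 1) = 0 := by
  intro q
  have hFd : DifferentiableAt ℝ F q := hF.differentiable one_ne_zero q
  have hGd : DifferentiableAt ℝ (fun p => η p - F p * ξ p) q :=
    ((hη.differentiable one_ne_zero q).sub (hFd.mul (hξ.differentiable one_ne_zero q)))
  have hG := hGd.hasFDerivAt
  have hinv := (hasFDerivAt_inv (h0 q)).comp q hG
  simp only [Function.comp_def] at hinv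
  have hmul : HasFDerivAt (fun p => (-(F p)) * (η p - F p * ξ p)⁻¹) _ q := hFd.hasFDerivAt.neg.mul hinv
  rw [hinv.fderiv, hmul.fderiv]
  simp only [ContinuousLinearMap.add_apply, ContinuousLinearMap.smul_apply,
    ContinuousLinearMap.neg_apply, ContinuousLinearMap.comp_apply,
    ContinuousLinearMap.smulRight_apply, ContinuousLinearMap.one_apply, smul_eq_mul,
    ContinuousLinearMap.toSpanSingleton_apply, Pi.neg_apply]
  have h := hlie q
  have hg := h0 q
  field_simp
  linear_combination (-1 : ℝ) * h
end

section
/- Let φ(x,y,v) be a C² first integral of v' = F (i.e. φ_x + v φ_y + F(x,y) φ_v = 0) with φ_v ≠ 0, and let ψ(x,y;c) be defined implicitly by φ(x,y,ψ(x,y;c)) = c. Then ψ satisfies ψ_x + ψ ψ_y = F(x,y), and 1/φ_v(x,y,ψ(x,y;c)) is an integrating factor for dy - ψ dx: ∂_x(1/φ_v) + ∂_y(ψ/φ_v) = 0 along v = ψ(x,y;c). -/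
open ContinuousLinearMap

/-- Let `φ(x,y,v)` be a first integral of `v' = F`, i.e.
`φ_x + v φ_y + F φ_v = 0`, with `φ_v ≠ 0`, and let `ψ(x,y;c)` be defined
implicitly by `φ(x,y,ψ(x,y;c)) = c`. Then `ψ_x + ψ ψ_y = F`, and `1/φ_v` is an
integrating factor for `dy - ψ dx`, i.e.
`φ_{xv} + (ψ_x + ψψ_y)φ_{vv} + ψ φ_{yv} - ψ_y φ_v = 0` along `v = ψ(x,y;c)`. -/
theorem first_integral_integrating_factor
    (F : ℝ × ℝ → ℝ) (φ ψ : ℝ × ℝ × ℝ → ℝ)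
    (hF : ContDiff ℝ 1 F) (hφ : ContDiff ℝ 2 φ) (hψ : ContDiff ℝ 1 ψ)
    (hpde : ∀ q : ℝ × ℝ × ℝ,
      fderiv ℝ φ q (1, 0, 0) + q.2.2 * fderiv ℝ φ q (0, 1, 0)
        + F (q.1, q.2.1) * fderiv ℝ φ q (0, 0, 1) = 0)
    (hφv : ∀ q, fderiv ℝ φ q (0, 0, 1) ≠ 0)
    (himp : ∀ x y c : ℝ, φ (x, y, ψ (x, y, c)) = c) :
    ∀ x y c : ℝ,
      (fderiv ℝ ψ (x, y, c) (1, 0, 0)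
          + ψ (x, y, c) * fderiv ℝ ψ (x, y, c) (0, 1, 0) = F (x, y))
      ∧ (fderiv ℝ (fun q => fderiv ℝ φ q (0, 0, 1)) (x, y, ψ (x, y, c)) (1, 0, 0)
          + (fderiv ℝ ψ (x, y, c) (1, 0, 0)
              + ψ (x, y, c) * fderiv ℝ ψ (x, y, c) (0, 1, 0))
            * fderiv ℝ (fun q => fderiv ℝ φ q (0, 0, 1)) (x, y, ψ (x, y, c)) (0, 0, 1)
          + ψ (x, y, c)
            * fderiv ℝ (fun q => fderiv ℝ φ q (0, 0, 1)) (x, y, ψ (x, y, c)) (0, 1, 0)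
          - fderiv ℝ ψ (x, y, c) (0, 1, 0)
            * fderiv ℝ φ (x, y, ψ (x, y, c)) (0, 0, 1) = 0) := by
  intro x y c
  have hψd : DifferentiableAt ℝ ψ (x, y, c) := (hψ.differentiable one_ne_zero).differentiableAt
  have hφd : Differentiable ℝ φ := hφ.differentiable two_ne_zero
  set mp : ℝ × ℝ × ℝ := (x, y, ψ (x, y, c)) with hmp
  set Dm : (ℝ × ℝ × ℝ) →L[ℝ] (ℝ × ℝ × ℝ) :=
    (fst ℝ ℝ (ℝ × ℝ)).prod (((fst ℝ ℝ ℝ).comp (snd ℝ ℝ (ℝ × ℝ))).prod (fderiv ℝ ψ (x, y, c)))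
    with hDm
  have hmd : HasFDerivAt (fun q : ℝ × ℝ × ℝ => (q.1, q.2.1, ψ q)) Dm (x, y, c) :=
    HasFDerivAt.prodMk (hasFDerivAt_fst (p := ((x:ℝ), (y:ℝ), (c:ℝ))))
      (HasFDerivAt.prodMk (HasFDerivAt.fst (hasFDerivAt_snd (p := ((x:ℝ), (y:ℝ), (c:ℝ))))) hψd.hasFDerivAt)
  have hcomp : HasFDerivAt (fun q : ℝ × ℝ × ℝ => φ (q.1, q.2.1, ψ q))
      ((fderiv ℝ φ mp).comp Dm) (x, y, c) :=
    (hφd mp).hasFDerivAt.comp (x, y, c) hmd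
  have hconst : (fun q : ℝ × ℝ × ℝ => φ (q.1, q.2.1, ψ q)) = fun q : ℝ × ℝ × ℝ => q.2.2 := by
    funext q
    exact himp q.1 q.2.1 q.2.2
  rw [hconst] at hcomp
  have hid : HasFDerivAt (fun q : ℝ × ℝ × ℝ => q.2.2)
      ((snd ℝ ℝ ℝ).comp (snd ℝ ℝ (ℝ × ℝ))) (x, y, c) := hasFDerivAt_snd.snd
  have huniq : (fderiv ℝ φ mp).comp Dm = (snd ℝ ℝ ℝ).comp (snd ℝ ℝ (ℝ × ℝ)) :=
    hcomp.unique hid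
  set L : (ℝ × ℝ × ℝ) →L[ℝ] ℝ := fderiv ℝ φ mp with hL
  have hsplit : ∀ a b w : ℝ, L (a, b, w) = a * L (1,0,0) + b * L (0,1,0) + w * L (0,0,1) := by
    intro a b w
    have h : ((a, b, w) : ℝ × ℝ × ℝ) = a • ((1:ℝ),(0:ℝ),(0:ℝ)) + b • ((0:ℝ),(1:ℝ),(0:ℝ))
        + w • ((0:ℝ),(0:ℝ),(1:ℝ)) := by
      simp [Prod.ext_iff]
    rw [h, L.map_add, L.map_add, L.map_smul, L.map_smul, L.map_smul]
    simp only [smul_eq_mul]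
  have h1 : L (1, 0, fderiv ℝ ψ (x, y, c) (1,0,0)) = 0 := by
    have := congrArg (fun (T : (ℝ × ℝ × ℝ) →L[ℝ] ℝ) => T (1,0,0)) huniq
    simpa [hDm] using this
  have h2 : L (0, 1, fderiv ℝ ψ (x, y, c) (0,1,0)) = 0 := by
    have := congrArg (fun (T : (ℝ × ℝ × ℝ) →L[ℝ] ℝ) => T (0,1,0)) huniq
    simpa [hDm] using this
  have e1 : L (1,0,0) + fderiv ℝ ψ (x, y, c) (1,0,0) * L (0,0,1) = 0 := by
    have := hsplit 1 0 (fderiv ℝ ψ (x, y, c) (1,0,0)); rw [h1] at this; linarith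
  have e2 : L (0,1,0) + fderiv ℝ ψ (x, y, c) (0,1,0) * L (0,0,1) = 0 := by
    have := hsplit 0 1 (fderiv ℝ ψ (x, y, c) (0,1,0)); rw [h2] at this; linarith
  have hpde' : L (1,0,0) + ψ (x, y, c) * L (0,1,0) + F (x, y) * L (0,0,1) = 0 := by
    have := hpde mp
    simpa [hmp, hL] using this
  have hLv : L (0,0,1) ≠ 0 := hφv mp
  have hx' : L (1,0,0) = -(fderiv ℝ ψ (x, y, c) (1,0,0) * L (0,0,1)) := by linarith
  have hy' : L (0,1,0) = -(fderiv ℝ ψ (x, y, c) (0,1,0) * L (0,0,1)) := by linarith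
  have part1 : fderiv ℝ ψ (x, y, c) (1,0,0)
      + ψ (x, y, c) * fderiv ℝ ψ (x, y, c) (0,1,0) = F (x, y) := by
    have key : (F (x,y) - (fderiv ℝ ψ (x, y, c) (1,0,0)
        + ψ (x, y, c) * fderiv ℝ ψ (x, y, c) (0,1,0))) * L (0,0,1) = 0 := by
      rw [hx', hy'] at hpde'
      linear_combination hpde'
    rcases mul_eq_zero.mp key with h | h
    · linarith
    · exact absurd h hLv
  refine ⟨part1, ?_⟩
  -- second part: differentiate the PDE in direction (0,0,1)
  have hf'd : Differentiable ℝ (fderiv ℝ φ) := (hφ.fderiv_right le_rfl).differentiable one_ne_zero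
  set B : (ℝ × ℝ × ℝ) →L[ℝ] ((ℝ × ℝ × ℝ) →L[ℝ] ℝ) := fderiv ℝ (fderiv ℝ φ) mp with hB
  have hBd : HasFDerivAt (fderiv ℝ φ) B mp := (hf'd mp).hasFDerivAt
  have happ : ∀ w : ℝ × ℝ × ℝ, HasFDerivAt (fun q => fderiv ℝ φ q w)
      ((ContinuousLinearMap.apply ℝ ℝ w).comp B) mp := fun w =>
    (ContinuousLinearMap.apply ℝ ℝ w).hasFDerivAt.comp mp hBd
  have hvd : HasFDerivAt (fun q : ℝ × ℝ × ℝ => q.2.2)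
      ((snd ℝ ℝ ℝ).comp (snd ℝ ℝ (ℝ × ℝ))) mp := hasFDerivAt_snd.snd
  set π : (ℝ × ℝ × ℝ) →L[ℝ] (ℝ × ℝ) :=
    (fst ℝ ℝ (ℝ × ℝ)).prod ((fst ℝ ℝ ℝ).comp (snd ℝ ℝ (ℝ × ℝ))) with hπ
  have hFd : HasFDerivAt (fun q : ℝ × ℝ × ℝ => F (q.1, q.2.1))
      ((fderiv ℝ F (mp.1, mp.2.1)).comp π) mp :=
    ((hF.differentiable one_ne_zero) _).hasFDerivAt.comp mp π.hasFDerivAt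
  have hH : HasFDerivAt (fun q : ℝ × ℝ × ℝ => fderiv ℝ φ q (1,0,0)
        + q.2.2 * fderiv ℝ φ q (0,1,0) + F (q.1, q.2.1) * fderiv ℝ φ q (0,0,1))
      ((((ContinuousLinearMap.apply ℝ ℝ ((1:ℝ),(0:ℝ),(0:ℝ))).comp B)
        + (mp.2.2 • ((ContinuousLinearMap.apply ℝ ℝ ((0:ℝ),(1:ℝ),(0:ℝ))).comp B)
            + (fderiv ℝ φ mp (0,1,0)) • ((snd ℝ ℝ ℝ).comp (snd ℝ ℝ (ℝ × ℝ)))))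
        + ((F (mp.1, mp.2.1)) • ((ContinuousLinearMap.apply ℝ ℝ ((0:ℝ),(0:ℝ),(1:ℝ))).comp B)
            + (fderiv ℝ φ mp (0,0,1)) • ((fderiv ℝ F (mp.1, mp.2.1)).comp π))) mp :=
    ((happ (1,0,0)).add (hvd.mul (happ (0,1,0)))).add (hFd.mul (happ (0,0,1)))
  have hHzero : (fun q : ℝ × ℝ × ℝ => fderiv ℝ φ q (1,0,0)
      + q.2.2 * fderiv ℝ φ q (0,1,0) + F (q.1, q.2.1) * fderiv ℝ φ q (0,0,1))
      = fun _ => (0:ℝ) := by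
    funext q; exact hpde q
  have hDzero := hH.unique (hHzero ▸ hasFDerivAt_const (0:ℝ) mp)
  have heval := congrArg (fun (T : (ℝ × ℝ × ℝ) →L[ℝ] ℝ) => T ((0:ℝ),(0:ℝ),(1:ℝ))) hDzero
  simp only [ContinuousLinearMap.add_apply, ContinuousLinearMap.smul_apply,
    ContinuousLinearMap.comp_apply, ContinuousLinearMap.apply_apply,
    ContinuousLinearMap.zero_apply, smul_eq_mul] at heval
  have hπ3 : π ((0:ℝ),(0:ℝ),(1:ℝ)) = 0 := by simp [hπ, Prod.ext_iff]
  rw [hπ3] at heval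
  simp only [map_zero, mul_zero, add_zero] at heval
  -- symmetry of the second derivative
  have hsymm := (hφ.contDiffAt (x := mp)).isSymmSndFDerivAt (by simp)
  have hs1 : fderiv ℝ (fun q => fderiv ℝ φ q ((0:ℝ),(0:ℝ),(1:ℝ))) mp ((1:ℝ),(0:ℝ),(0:ℝ))
      = B ((0:ℝ),(0:ℝ),(1:ℝ)) ((1:ℝ),(0:ℝ),(0:ℝ)) := by
    rw [(happ ((0:ℝ),(0:ℝ),(1:ℝ))).fderiv]
    simpa using hsymm (1,0,0) (0,0,1)
  have hs2 : fderiv ℝ (fun q => fderiv ℝ φ q ((0:ℝ),(0:ℝ),(1:ℝ))) mp ((0:ℝ),(1:ℝ),(0:ℝ))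
      = B ((0:ℝ),(0:ℝ),(1:ℝ)) ((0:ℝ),(1:ℝ),(0:ℝ)) := by
    rw [(happ ((0:ℝ),(0:ℝ),(1:ℝ))).fderiv]
    simpa using hsymm (0,1,0) (0,0,1)
  have hs3 : fderiv ℝ (fun q => fderiv ℝ φ q ((0:ℝ),(0:ℝ),(1:ℝ))) mp ((0:ℝ),(0:ℝ),(1:ℝ))
      = B ((0:ℝ),(0:ℝ),(1:ℝ)) ((0:ℝ),(0:ℝ),(1:ℝ)) := by
    rw [(happ ((0:ℝ),(0:ℝ),(1:ℝ))).fderiv]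
    simp
  rw [show fderiv ℝ φ mp ((0:ℝ),(1:ℝ),(0:ℝ)) = L ((0:ℝ),(1:ℝ),(0:ℝ)) from rfl, hy',
    show (snd ℝ ℝ ℝ) ((snd ℝ ℝ (ℝ × ℝ)) ((0:ℝ),(0:ℝ),(1:ℝ))) = 1 from rfl, mul_one] at heval
  rw [hs1, hs2, hs3, part1]
  linear_combination heval
end

section
/- Consider the Pfaffian identity dz - p dx + H(t,x,z,p) dt = dZ - P dX on ℝ⁴ with coordinates (t,x,z,p), where Z, X, P are smooth functions of (t,x,z,p). Taking exterior derivative and wedging, the 4-form obtained from the closure conditions equals 2(∂H/∂z) dt∧dx∧dz∧dp; hence compatibility of the system forces ∂H/∂z = 0. -/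
set_option maxHeartbeats 1000000 in
/-- If smooth functions `Z, X, P` of `(t,x,z,p)` satisfy the Pfaffian identity
`dz - p dx + H dt = dZ - P dX` (as an identity of 1-forms, i.e. evaluated on
every tangent vector `v`), then compatibility forces `∂H/∂z = 0`. -/
theorem pfaffian_forces_H_z_zero (H Z X P : ℝ × ℝ × ℝ × ℝ → ℝ)
    (hH : ContDiff ℝ 2 H) (hZ : ContDiff ℝ 2 Z)
    (hX : ContDiff ℝ 2 X) (hP : ContDiff ℝ 2 P)
    (hpfaff : ∀ (q v : ℝ × ℝ × ℝ × ℝ),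
      v.2.2.1 - q.2.2.2 * v.2.1 + H q * v.1
        = fderiv ℝ Z q v - P q * fderiv ℝ X q v) :
    ∀ q : ℝ × ℝ × ℝ × ℝ, fderiv ℝ H q (0, 0, 1, 0) = 0 := by
  intro q
  have h1le : (1:WithTop ℕ∞) ≤ 2 := by norm_num
  have hZd : Differentiable ℝ Z := hZ.differentiable (by norm_num)
  have hXd : Differentiable ℝ X := hX.differentiable (by norm_num)
  have hPd : Differentiable ℝ P := hP.differentiable (by norm_num)
  have hHd : Differentiable ℝ H := hH.differentiable (by norm_num)
  have hZ1 : ContDiff ℝ 1 (fderiv ℝ Z) := hZ.fderiv_right (le_refl 2)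
  have hX1 : ContDiff ℝ 1 (fderiv ℝ X) := hX.fderiv_right (le_refl 2)
  set Φ := fderiv ℝ (fderiv ℝ Z) q with hΦdef
  set Ψ := fderiv ℝ (fderiv ℝ X) q with hΨdef
  have hΦ : HasFDerivAt (fderiv ℝ Z) Φ q := ((hZ1.differentiable one_ne_zero) q).hasFDerivAt
  have hΨ : HasFDerivAt (fderiv ℝ X) Ψ q := ((hX1.differentiable one_ne_zero) q).hasFDerivAt
  have symZ : ∀ a b, Φ a b = Φ b a :=
    second_derivative_symmetric (fun y => (hZd y).hasFDerivAt) hΦ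
  have symX : ∀ a b, Ψ a b = Ψ b a :=
    second_derivative_symmetric (fun y => (hXd y).hasFDerivAt) hΨ
  -- differentiate the Pfaffian identity at q in direction w
  have key : ∀ v w : ℝ × ℝ × ℝ × ℝ,
      Φ w v - (P q * Ψ w v + fderiv ℝ X q v * fderiv ℝ P q w)
        = fderiv ℝ H q w * v.1 - w.2.2.2 * v.2.1 := by
    intro v w
    have hd1 : HasFDerivAt (fun y => fderiv ℝ Z y v)
        ((ContinuousLinearMap.apply ℝ ℝ v).comp Φ) q :=
      ((ContinuousLinearMap.apply ℝ ℝ v).hasFDerivAt).comp q hΦ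
    have hd2 : HasFDerivAt (fun y => fderiv ℝ X y v)
        ((ContinuousLinearMap.apply ℝ ℝ v).comp Ψ) q :=
      ((ContinuousLinearMap.apply ℝ ℝ v).hasFDerivAt).comp q hΨ
    have hL : HasFDerivAt (fun y => fderiv ℝ Z y v - P y * fderiv ℝ X y v)
        ((ContinuousLinearMap.apply ℝ ℝ v).comp Φ -
          (P q • ((ContinuousLinearMap.apply ℝ ℝ v).comp Ψ) +
            (fderiv ℝ X q v) • fderiv ℝ P q)) q :=
      hd1.sub ((hPd q).hasFDerivAt.mul hd2)
    have hfe : (fun y => fderiv ℝ Z y v - P y * fderiv ℝ X y v)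
        = (fun y : ℝ×ℝ×ℝ×ℝ => v.2.2.1 - y.2.2.2 * v.2.1 + H y * v.1) :=
      funext fun y => (hpfaff y v).symm
    rw [hfe] at hL
    set l4 : (ℝ×ℝ×ℝ×ℝ) →L[ℝ] ℝ :=
      (ContinuousLinearMap.snd ℝ ℝ ℝ).comp
        ((ContinuousLinearMap.snd ℝ ℝ (ℝ×ℝ)).comp
          (ContinuousLinearMap.snd ℝ ℝ (ℝ×(ℝ×ℝ)))) with hl4
    have hsnd : HasFDerivAt (fun y : ℝ×ℝ×ℝ×ℝ => y.2.2.2) l4 q := l4.hasFDerivAt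
    have hR : HasFDerivAt (fun y : ℝ×ℝ×ℝ×ℝ => v.2.2.1 - y.2.2.2 * v.2.1 + H y * v.1)
        (((0 : (ℝ×ℝ×ℝ×ℝ) →L[ℝ] ℝ) - v.2.1 • l4) + v.1 • fderiv ℝ H q) q :=
      ((hasFDerivAt_const v.2.2.1 q).sub (hsnd.mul_const v.2.1)).add
        ((hHd q).hasFDerivAt.mul_const v.1)
    have heq := hL.unique hR
    have hw := congrArg (fun f : (ℝ×ℝ×ℝ×ℝ) →L[ℝ] ℝ => f w) heq
    simp only [ContinuousLinearMap.sub_apply, ContinuousLinearMap.add_apply,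
      ContinuousLinearMap.smul_apply, ContinuousLinearMap.comp_apply,
      ContinuousLinearMap.apply_apply, ContinuousLinearMap.zero_apply,
      ContinuousLinearMap.coe_snd', smul_eq_mul] at hw
    have hl4w : l4 w = w.2.2.2 := rfl
    rw [hl4w] at hw
    linear_combination hw
  have bident : ∀ v w : ℝ × ℝ × ℝ × ℝ,
      fderiv ℝ X q v * fderiv ℝ P q w - fderiv ℝ X q w * fderiv ℝ P q v
        = (fderiv ℝ H q v * w.1 - fderiv ℝ H q w * v.1)
          - (v.2.2.2 * w.2.1 - w.2.2.2 * v.2.1) := by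
    intro v w
    have h1 := key v w
    have h2 := key w v
    rw [symZ v w, symX v w] at h2
    linear_combination h2 - h1
  have e1 := bident (1,0,0,0) (0,1,0,0)
  have e2 := bident (0,0,1,0) (0,0,0,1)
  have e3 := bident (1,0,0,0) (0,0,1,0)
  have e4 := bident (0,1,0,0) (0,0,0,1)
  have e5 := bident (1,0,0,0) (0,0,0,1)
  have e6 := bident (0,1,0,0) (0,0,1,0)
  norm_num at e1 e2 e3 e4 e5 e6
  -- Plücker relation for the decomposable 2-form dX ∧ dP
  linear_combination
    (-(fderiv ℝ X q (0,0,1,0) * fderiv ℝ P q (0,0,0,1)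
        - fderiv ℝ X q (0,0,0,1) * fderiv ℝ P q (0,0,1,0))) * e1
    + (fderiv ℝ H q (0,1,0)) * e2
    + (fderiv ℝ X q (0,1,0) * fderiv ℝ P q (0,0,0,1)
        - fderiv ℝ X q (0,0,0,1) * fderiv ℝ P q (0,1,0)) * e3
    + (-(fderiv ℝ H q (0,0,1,0))) * e4
    + (-(fderiv ℝ X q (0,1,0) * fderiv ℝ P q (0,0,1,0)
        - fderiv ℝ X q (0,0,1,0) * fderiv ℝ P q (0,1,0))) * e5
    + (fderiv ℝ H q (0,0,0,1)) * e6
end
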